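/- Let v_k^{(j)} : ℝ → ℝ (1 ≤ j ≤ m, k mod N) be differentiable functions satisfying the Bogoyavlensky equations v̇_k^{(j)} = v_k^{(j)} ( Σ_{i=j+1}^{m} (v_k^{(i)} − v_{k−1}^{(i)}) + Σ_{i=1}^{j−1} (v_{k+1}^{(i)} − v_k^{(i)}) ). Fix j ∈ {1,…,m}, and regard L_j as an N×N matrix over ℝ[λ,λ⁻¹] depending on t through v(t). Then: (a) the strictly positive λ-degree part of L_j equals λ·E, where E = Σ_{k=1}^{N} E_{k+1,k} (cyclic); write L_j = λE + D_j + L_j^−, where D_j is the λ-degree-zero part and L_j^− the strictly negative λ-degree part; (b) for every t, d/dt L_j(t) = [L_j^−(t), L_j(t)] = L_j^−(t)⬝L_j(t) − L_j(t)⬝L_j^−(t), an identity of matrices over ℝ[λ,λ⁻¹]; equivalently, after evaluating at any real λ ≠ 0, dL_j/dt = [L_j, R(L_j)] with R(L_j) = (λE + D_j − L_j^−)/2. -/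

import Mathlib

open Matrix LaurentPolynomial

set_option linter.unusedSectionVars false
set_option maxHeartbeats 1000000

/-- `U_1 = λ Σ_k E_{k+1,k} + Σ_k v_k^{(1)} E_{kk}` over `ℝ[λ,λ⁻¹]`
(indices cyclic mod N; `v j k` with `j` the 1-based sort index). -/
noncomputable def U1t (N : ℕ) [NeZero N] (v : ℕ → Fin N → ℝ) :
    Matrix (Fin N) (Fin N) (LaurentPolynomial ℝ) :=
  (∑ k : Fin N, Matrix.single (k + 1) k (LaurentPolynomial.T 1))
    + ∑ k : Fin N, Matrix.single k k (LaurentPolynomial.C (v 1 k))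

/-- `V_j = I + λ⁻¹ Σ_k v_k^{(j)} E_{k,k+1}` over `ℝ[λ,λ⁻¹]` (`j` 1-based). -/
noncomputable def Vjt (N : ℕ) [NeZero N] (v : ℕ → Fin N → ℝ) (j : ℕ) :
    Matrix (Fin N) (Fin N) (LaurentPolynomial ℝ) :=
  1 + ∑ k : Fin N,
    Matrix.single k (k + 1) (LaurentPolynomial.C (v j k) * LaurentPolynomial.T (-1))

/-- `L_j = V_j ⬝ ⋯ ⬝ V_2 ⬝ U_1 ⬝ V_m ⬝ ⋯ ⬝ V_{j+1}` over `ℝ[λ,λ⁻¹]` (`j` 1-based). -/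
noncomputable def Ljt (m N : ℕ) [NeZero N] (v : ℕ → Fin N → ℝ) (j : ℕ) :
    Matrix (Fin N) (Fin N) (LaurentPolynomial ℝ) :=
  (((List.range' 2 (j - 1)).reverse.map (Vjt N v)).prod)
    * U1t N v
    * (((List.range' (j + 1) (m - j)).reverse.map (Vjt N v)).prod)

/-- `λE = λ Σ_k E_{k+1,k}` over `ℝ[λ,λ⁻¹]` (indices cyclic mod N). -/
noncomputable def ELmat (N : ℕ) [NeZero N] :
    Matrix (Fin N) (Fin N) (LaurentPolynomial ℝ) :=
  ∑ k : Fin N, Matrix.single (k + 1) k (LaurentPolynomial.T 1)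

namespace Stmt17Aux

abbrev LR := LaurentPolynomial ℝ
abbrev MM (N : ℕ) := Matrix (Fin N) (Fin N) LR

instance : CoeFun LR (fun _ => ℤ → ℝ) := ⟨fun f => ⇑(AddMonoidAlgebra.coeff f)⟩

/-! ### scalar coefficient lemmas -/

lemma coeff_CT (r : ℝ) (n p : ℤ) : (C r * T n : LR) p = if n = p then r else 0 := by
  rw [← single_eq_C_mul_T]; exact Finsupp.single_apply

lemma coeff_C (r : ℝ) (p : ℤ) : (C r : LR) p = if (0:ℤ) = p then r else 0 := by
  have := coeff_CT r 0 p; rwa [T_zero, mul_one] at this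

lemma coeff_T (n p : ℤ) : (T n : LR) p = if n = p then (1:ℝ) else 0 := by
  have := coeff_CT 1 n p; rwa [_root_.map_one, one_mul] at this

lemma coeff_one (p : ℤ) : (1 : LR) p = if (0:ℤ) = p then (1:ℝ) else 0 := by
  have := coeff_T 0 p; rwa [T_zero] at this

lemma mul_apply_sup (f g : LR) (S : Finset ℤ) (hS : f.coeff.support ⊆ S) (p : ℤ) :
    (f * g) p = ∑ q ∈ S, f q * g (p - q) := by
  rw [AddMonoidAlgebra.coeff_mul]
  have h1 : ∀ (q : ℤ) (b₁ : ℝ),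
      (Finsupp.sum g.coeff fun a₂ b₂ => if q + a₂ = p then b₁ * b₂ else 0) = b₁ * g (p - q) := by
    intro q b₁
    rw [Finsupp.sum]
    rw [Finset.sum_eq_single (p - q)]
    · simp
    · intro c hc hne
      rw [if_neg (by omega)]
    · intro h
      rw [Finsupp.notMem_support_iff.mp h]
      simp
  rw [Finsupp.sum_of_support_subset _ hS _ (by intro i _; simp)]
  exact Finset.sum_congr rfl fun q _ => h1 q (f q)

lemma cmul_left0 {f g : LR} (hf : ∀ q, 0 < q → f q = 0) {p : ℤ} (hg : ∀ q, p < q → g q = 0) :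
    (f * g) p = f 0 * g p := by
  rw [mul_apply_sup f g (f.coeff.support ∪ {0}) Finset.subset_union_left p]
  rw [Finset.sum_eq_single_of_mem 0 (by simp)]
  · simp
  · intro q _ hq
    rcases lt_or_gt_of_ne hq with h | h
    · rw [hg (p - q) (by omega), mul_zero]
    · rw [hf q h, zero_mul]

lemma cmul_right0 {f g : LR} {h : ℤ} (hf : ∀ q, h < q → f q = 0) (hg : ∀ q, 0 < q → g q = 0) :
    (f * g) h = f h * g 0 := by
  rw [mul_apply_sup f g (f.coeff.support ∪ {h}) Finset.subset_union_left h]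
  rw [Finset.sum_eq_single_of_mem h (by simp)]
  · simp
  · intro q _ hq
    rcases lt_or_gt_of_ne hq with h1 | h1
    · rw [hg (h - q) (by omega), mul_zero]
    · rw [hf q h1, zero_mul]

lemma cmul_two {f g : LR} {p : ℤ} (hf : ∀ q, 0 < q → f q = 0) (hg : ∀ q, p + 1 < q → g q = 0) :
    (f * g) p = f 0 * g p + f (-1) * g (p + 1) := by
  rw [mul_apply_sup f g (f.coeff.support ∪ {0, -1}) Finset.subset_union_left p]
  rw [← Finset.sum_subset (Finset.subset_union_right (s₁ := f.coeff.support))]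
  · rw [Finset.sum_insert (by decide), Finset.sum_singleton]
    norm_num
  · intro q _ hq
    simp only [Finset.mem_insert, Finset.mem_singleton] at hq
    push_neg at hq
    rcases lt_or_gt_of_ne hq.1 with h1 | h1
    · rw [hg (p - q) (by omega), mul_zero]
    · rw [hf q h1, zero_mul]

lemma cmul_bound {f g : LR} {a b p : ℤ} (hf : ∀ q, a < q → f q = 0) (hg : ∀ q, b < q → g q = 0)
    (hp : a + b < p) : (f * g) p = 0 := by
  rw [mul_apply_sup f g f.coeff.support (le_refl _) p]
  refine Finset.sum_eq_zero fun q _ => ?_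
  rcases le_or_gt q a with h | h
  · rw [hg (p - q) (by omega), mul_zero]
  · rw [hf q h, zero_mul]

lemma cmul_mixed {f g : LR} (hfhi : ∀ q, 1 < q → f q = 0)
    (hg : ∀ q, 0 < q → g q = 0) : (f * g) 0 = f 0 * g 0 + f 1 * g (-1) := by
  rw [mul_apply_sup f g (f.coeff.support ∪ {0, 1}) Finset.subset_union_left 0]
  rw [← Finset.sum_subset (Finset.subset_union_right (s₁ := f.coeff.support))]
  · rw [Finset.sum_insert (by decide), Finset.sum_singleton]
    norm_num
  · intro q _ hq
    simp only [Finset.mem_insert, Finset.mem_singleton] at hq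
    push_neg at hq
    rcases lt_trichotomy q 0 with h1 | h1 | h1
    · rw [hg (0 - q) (by omega), mul_zero]
    · exact absurd h1 hq.1
    · rcases lt_or_ge 1 q with h2 | h2
      · rw [hfhi q h2, zero_mul]
      · rw [hg (0 - q) (by omega), mul_zero]

end Stmt17Aux
namespace Stmt17Aux

variable {N : ℕ} [NeZero N]

noncomputable def Amat (w : Fin N → ℝ) : MM N :=
  ∑ k : Fin N, Matrix.single k (k + 1) (C (w k) * T (-1))

noncomputable def Dmat (w : Fin N → ℝ) : MM N :=
  ∑ k : Fin N, Matrix.single k k (C (w k))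

lemma Vjt_eq (v : ℕ → Fin N → ℝ) (i : ℕ) : Vjt N v i = 1 + Amat (v i) := rfl

lemma U1t_eq (v : ℕ → Fin N → ℝ) : U1t N v = ELmat N + Dmat (v 1) := rfl

lemma ELmat_apply (a b : Fin N) : ELmat N a b = if a = b + 1 then T 1 else 0 := by
  rw [ELmat, Matrix.sum_apply]
  rw [Finset.sum_eq_single b]
  · simp [Matrix.single, Matrix.of_apply, eq_comm]
  · intro c _ hc
    simp only [Matrix.single, Matrix.of_apply]
    rw [if_neg (by rintro ⟨h1, h2⟩; exact hc h2)]
  · simp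

lemma Amat_apply (w : Fin N → ℝ) (a b : Fin N) :
    Amat w a b = if b = a + 1 then C (w a) * T (-1) else 0 := by
  rw [Amat, Matrix.sum_apply]
  rw [Finset.sum_eq_single a]
  · simp [Matrix.single, Matrix.of_apply, eq_comm]
  · intro c _ hc
    simp only [Matrix.single, Matrix.of_apply]
    rw [if_neg (by rintro ⟨h1, h2⟩; exact hc h1)]
  · simp

lemma Dmat_apply (w : Fin N → ℝ) (a b : Fin N) :
    Dmat w a b = if a = b then C (w a) else 0 := by
  rw [Dmat, Matrix.sum_apply]
  rw [Finset.sum_eq_single a]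
  · simp [Matrix.single, Matrix.of_apply, eq_comm]
  · intro c _ hc
    simp only [Matrix.single, Matrix.of_apply]
    rw [if_neg (by rintro ⟨h1, h2⟩; exact hc h1)]
  · simp

lemma Amat_mul_ELmat (w : Fin N → ℝ) : Amat w * ELmat N = Dmat w := by
  apply Matrix.ext; intro a b
  rw [Matrix.mul_apply, Finset.sum_eq_single (a + 1)]
  · rw [Amat_apply, ELmat_apply, Dmat_apply, if_pos rfl]
    by_cases h : a = b
    · rw [if_pos (by rw [h]), if_pos h, mul_assoc, ← T_add]
      norm_num
    · rw [if_neg (fun hh => h (add_right_cancel hh)), if_neg h, mul_zero]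
  · intro c _ hc
    rw [Amat_apply, if_neg hc, zero_mul]
  · simp

lemma ELmat_mul_Amat (w : Fin N → ℝ) :
    ELmat N * Amat w = Dmat (fun k => w (k - 1)) := by
  apply Matrix.ext; intro a b
  rw [Matrix.mul_apply, Finset.sum_eq_single (a - 1)]
  · rw [ELmat_apply, Amat_apply, Dmat_apply, if_pos (by rw [sub_add_cancel])]
    by_cases h : a = b
    · rw [if_pos (by rw [h, sub_add_cancel]), if_pos h, ← mul_assoc, mul_comm (T 1), mul_assoc,
        ← T_add]
      norm_num
    · rw [if_neg (fun hh => h (by rw [hh, sub_add_cancel])), if_neg h, mul_zero]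
  · intro c _ hc
    rw [ELmat_apply, if_neg (fun hh => hc (by rw [hh, add_sub_cancel_right])), zero_mul]
  · simp

lemma Amat_mul_Dmat (w d : Fin N → ℝ) :
    Amat w * Dmat d = Amat (fun k => w k * d (k + 1)) := by
  apply Matrix.ext; intro a b
  rw [Matrix.mul_apply, Finset.sum_eq_single (a + 1)]
  · rw [Amat_apply, Dmat_apply, Amat_apply, if_pos rfl]
    by_cases h : b = a + 1
    · rw [if_pos h.symm, if_pos h, _root_.map_mul]
      ring
    · rw [if_neg (fun hh => h hh.symm), if_neg h, mul_zero]
  · intro c _ hc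
    rw [Amat_apply, if_neg hc, zero_mul]
  · simp

lemma Dmat_mul_Amat (w d : Fin N → ℝ) :
    Dmat d * Amat w = Amat (fun k => d k * w k) := by
  apply Matrix.ext; intro a b
  rw [Matrix.mul_apply, Finset.sum_eq_single a]
  · rw [Dmat_apply, Amat_apply, Amat_apply, if_pos rfl]
    by_cases h : b = a + 1
    · rw [if_pos h, if_pos h, _root_.map_mul]; ring
    · rw [if_neg h, if_neg h, mul_zero]
  · intro c _ hc
    rw [Dmat_apply, if_neg (fun hh => hc hh.symm), zero_mul]
  · simp

lemma ELmat_mul_Dmat (d : Fin N → ℝ) :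
    ELmat N * Dmat d = Dmat (fun k => d (k - 1)) * ELmat N := by
  apply Matrix.ext; intro a b
  rw [Matrix.mul_apply, Matrix.mul_apply, Finset.sum_eq_single b, Finset.sum_eq_single a,
    ELmat_apply, Dmat_apply, if_pos rfl, Dmat_apply, if_pos rfl]
  rotate_left
  · intro c _ hc
    rw [Dmat_apply, if_neg (fun hh => hc hh.symm), zero_mul]
  · simp
  · intro c _ hc
    rw [Dmat_apply, if_neg hc, mul_zero]
  · simp
  · by_cases h : a = b + 1
    · simp only [if_pos h]
      rw [mul_comm]
      congr 2
      rw [h, add_sub_cancel_right]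
    · simp only [if_neg h]
      rw [zero_mul, mul_zero]

lemma Dmat_mul_Dmat (d e : Fin N → ℝ) :
    Dmat d * Dmat e = Dmat (fun k => d k * e k) := by
  apply Matrix.ext; intro a b
  rw [Matrix.mul_apply, Finset.sum_eq_single a]
  · rw [Dmat_apply, Dmat_apply, Dmat_apply, if_pos rfl]
    by_cases h : a = b
    · rw [if_pos h, if_pos h, _root_.map_mul]
    · rw [if_neg h, if_neg h, mul_zero]
  · intro c _ hc
    rw [Dmat_apply, if_neg (fun hh => hc hh.symm), zero_mul]
  · simp

lemma Dmat_add (d e : Fin N → ℝ) : Dmat d + Dmat e = Dmat (fun k => d k + e k) := by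
  apply Matrix.ext; intro a b
  rw [Matrix.add_apply, Dmat_apply, Dmat_apply, Dmat_apply]
  by_cases h : a = b
  · rw [if_pos h, if_pos h, if_pos h, _root_.map_add]
  · rw [if_neg h, if_neg h, if_neg h, add_zero]

lemma Dmat_sub (d e : Fin N → ℝ) : Dmat d - Dmat e = Dmat (fun k => d k - e k) := by
  apply Matrix.ext; intro a b
  rw [Matrix.sub_apply, Dmat_apply, Dmat_apply, Dmat_apply]
  by_cases h : a = b
  · rw [if_pos h, if_pos h, if_pos h, _root_.map_sub]
  · rw [if_neg h, if_neg h, if_neg h, sub_zero]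

lemma Amat_sub (d e : Fin N → ℝ) : Amat d - Amat e = Amat (fun k => d k - e k) := by
  apply Matrix.ext; intro a b
  rw [Matrix.sub_apply, Amat_apply, Amat_apply, Amat_apply]
  by_cases h : b = a + 1
  · rw [if_pos h, if_pos h, if_pos h, _root_.map_sub, sub_mul]
  · rw [if_neg h, if_neg h, if_neg h, sub_zero]

lemma Amat_add (d e : Fin N → ℝ) : Amat d + Amat e = Amat (fun k => d k + e k) := by
  apply Matrix.ext; intro a b
  rw [Matrix.add_apply, Amat_apply, Amat_apply, Amat_apply]
  by_cases h : b = a + 1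
  · rw [if_pos h, if_pos h, if_pos h, _root_.map_add, add_mul]
  · rw [if_neg h, if_neg h, if_neg h, add_zero]

lemma Dmat_zero : Dmat (fun _ : Fin N => (0:ℝ)) = 0 := by
  apply Matrix.ext; intro a b
  rw [Dmat_apply, Matrix.zero_apply]
  split <;> simp

lemma Amat_zero : Amat (fun _ : Fin N => (0:ℝ)) = 0 := by
  apply Matrix.ext; intro a b
  rw [Amat_apply, Matrix.zero_apply]
  split <;> simp

/-! ### local Lax (gauge) identities -/

lemma Vlax (w d1 d2 : Fin N → ℝ) (h : ∀ k, d2 k = d1 k + w k - w (k - 1)) :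
    (1 + Amat w) * (ELmat N + Dmat d1) - (ELmat N + Dmat d2) * (1 + Amat w)
      = Amat (fun k => w k * (d1 (k + 1) - d2 k)) := by
  have expand : (1 + Amat w) * (ELmat N + Dmat d1) - (ELmat N + Dmat d2) * (1 + Amat w)
      = ((Dmat d1 - Dmat d2) + (Amat w * ELmat N - ELmat N * Amat w))
        + (Amat w * Dmat d1 - Dmat d2 * Amat w) := by noncomm_ring
  rw [expand, Amat_mul_ELmat, ELmat_mul_Amat, Amat_mul_Dmat, Dmat_mul_Amat, Dmat_sub, Dmat_sub,
    Dmat_add, Amat_sub]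
  rw [show (fun k => d1 k - d2 k + (w k - w (k - 1))) = fun _ => (0:ℝ) by
    funext k; rw [h k]; ring]
  rw [Dmat_zero, zero_add]
  exact congrArg Amat (funext fun k => by ring)

lemma Ulax (w1 dm d1' : Fin N → ℝ) (h : ∀ k, d1' k = dm (k - 1) + w1 k - w1 (k - 1)) :
    (ELmat N + Dmat w1) * (ELmat N + Dmat dm) - (ELmat N + Dmat d1') * (ELmat N + Dmat w1)
      = Dmat (fun k => w1 k * (dm k - d1' k)) := by
  have expand : (ELmat N + Dmat w1) * (ELmat N + Dmat dm)
        - (ELmat N + Dmat d1') * (ELmat N + Dmat w1)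
      = ((ELmat N * Dmat dm - ELmat N * Dmat w1) + (Dmat w1 * ELmat N - Dmat d1' * ELmat N))
        + (Dmat w1 * Dmat dm - Dmat d1' * Dmat w1) := by noncomm_ring
  rw [expand, ELmat_mul_Dmat dm, ELmat_mul_Dmat w1, Dmat_mul_Dmat, Dmat_mul_Dmat,
    ← sub_mul, ← sub_mul, ← add_mul, Dmat_sub, Dmat_sub, Dmat_add, Dmat_sub]
  rw [show (fun k => dm (k - 1) - w1 (k - 1) + (w1 k - d1' k)) = fun _ => (0:ℝ) by
    funext k; rw [h k]; ring]
  rw [Dmat_zero, zero_mul, zero_add]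
  exact congrArg Dmat (funext fun k => by ring)

end Stmt17Aux
namespace Stmt17Aux

variable {N : ℕ} [NeZero N]

/-! ### gauges -/

def dfun (m : ℕ) (w : ℕ → Fin N → ℝ) (i : ℕ) (k : Fin N) : ℝ :=
  (∑ l ∈ Finset.Icc 1 i, w l k) + ∑ l ∈ Finset.Icc (i + 1) m, w l (k - 1)

noncomputable def Gm (m : ℕ) (w : ℕ → Fin N → ℝ) (i : ℕ) : MM N :=
  ELmat N + Dmat (dfun m w i)

lemma Icc_insert_right {a b : ℕ} (h : a ≤ b) :
    Finset.Icc a b = insert b (Finset.Icc a (b - 1)) := by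
  ext x; simp only [Finset.mem_Icc, Finset.mem_insert]; omega

lemma Icc_insert_left {a b : ℕ} (h : a ≤ b) :
    Finset.Icc a b = insert a (Finset.Icc (a + 1) b) := by
  ext x; simp only [Finset.mem_Icc, Finset.mem_insert]; omega

lemma sum_Icc_insert_right {a b : ℕ} (h : a ≤ b) (h1 : 1 ≤ b) (f : ℕ → ℝ) :
    ∑ l ∈ Finset.Icc a b, f l = f b + ∑ l ∈ Finset.Icc a (b - 1), f l := by
  rw [Icc_insert_right h, Finset.sum_insert (by simp only [Finset.mem_Icc]; omega)]

lemma sum_Icc_insert_left {a b : ℕ} (h : a ≤ b) (f : ℕ → ℝ) :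
    ∑ l ∈ Finset.Icc a b, f l = f a + ∑ l ∈ Finset.Icc (a + 1) b, f l := by
  rw [Icc_insert_left h, Finset.sum_insert (by simp only [Finset.mem_Icc]; omega)]

-- (R1)
lemma dfun_succ (m : ℕ) (w : ℕ → Fin N → ℝ) (i : ℕ) (him : i + 1 ≤ m) (k : Fin N) :
    dfun m w (i + 1) k = dfun m w i k + w (i + 1) k - w (i + 1) (k - 1) := by
  unfold dfun
  rw [sum_Icc_insert_right (by omega : 1 ≤ i + 1) (by omega) (fun l => w l k),
    show i + 1 - 1 = i from rfl,
    sum_Icc_insert_left (by omega : i + 1 ≤ m) (fun l => w l (k - 1))]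
  ring

-- (R2)
lemma dfun_ode (m : ℕ) (w : ℕ → Fin N → ℝ) (i : ℕ) (him : i + 1 ≤ m) (k : Fin N) :
    dfun m w i (k + 1) - dfun m w (i + 1) k
      = (∑ l ∈ Finset.Icc (i + 1 + 1) m, (w l k - w l (k - 1)))
        + ∑ l ∈ Finset.Icc 1 i, (w l (k + 1) - w l k) := by
  unfold dfun
  rw [show k + 1 - 1 = k from add_sub_cancel_right k 1]
  rw [sum_Icc_insert_left (by omega : i + 1 ≤ m) (fun l => w l k),
    sum_Icc_insert_right (by omega : 1 ≤ i + 1) (by omega) (fun l => w l k),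
    show i + 1 - 1 = i from rfl,
    Finset.sum_sub_distrib, Finset.sum_sub_distrib]
  ring

-- (R3)
lemma dfun_wrap (m : ℕ) (w : ℕ → Fin N → ℝ) (hm : 1 ≤ m) (k : Fin N) :
    dfun m w 1 k = dfun m w m (k - 1) + w 1 k - w 1 (k - 1) := by
  unfold dfun
  rw [Finset.Icc_eq_empty (by omega : ¬ m + 1 ≤ m), Finset.sum_empty, add_zero,
    Finset.Icc_self, Finset.sum_singleton,
    sum_Icc_insert_left (by omega : 1 ≤ m) (fun l => w l (k - 1))]
  ring

-- (R4)
lemma dfun_ode1 (m : ℕ) (w : ℕ → Fin N → ℝ) (hm : 1 ≤ m) (k : Fin N) :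
    dfun m w m k - dfun m w 1 k
      = (∑ l ∈ Finset.Icc (1 + 1) m, (w l k - w l (k - 1)))
        + ∑ l ∈ Finset.Icc 1 (1 - 1), (w l (k + 1) - w l k) := by
  unfold dfun
  rw [show (1:ℕ) - 1 = 0 from rfl, show Finset.Icc 1 0 = ∅ from rfl, Finset.sum_empty,
    Finset.Icc_eq_empty (by omega : ¬ m + 1 ≤ m), Finset.sum_empty,
    Finset.Icc_self, Finset.sum_singleton,
    sum_Icc_insert_left (by omega : 1 ≤ m) (fun l => w l k),
    Finset.sum_sub_distrib]
  ring

/-! ### coefficient formulas for the factors -/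

lemma Vjt_coeff (v : ℕ → Fin N → ℝ) (i : ℕ) (a b : Fin N) (p : ℤ) :
    ((Vjt N v i) a b) p
      = (if a = b then (if (0:ℤ) = p then (1:ℝ) else 0) else 0)
        + (if b = a + 1 then (if (-1:ℤ) = p then v i a else 0) else 0) := by
  rw [Vjt_eq, Matrix.add_apply, AddMonoidAlgebra.coeff_add, Finsupp.add_apply, Amat_apply, Matrix.one_apply]
  congr 1
  · rw [apply_ite (fun f : LR => f p), coeff_one]
    rfl
  · rw [apply_ite (fun f : LR => f p), coeff_CT]
    rfl

lemma U1t_coeff (v : ℕ → Fin N → ℝ) (a b : Fin N) (p : ℤ) :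
    ((U1t N v) a b) p
      = (if a = b + 1 then (if (1:ℤ) = p then (1:ℝ) else 0) else 0)
        + (if a = b then (if (0:ℤ) = p then v 1 a else 0) else 0) := by
  rw [U1t_eq, Matrix.add_apply, AddMonoidAlgebra.coeff_add, Finsupp.add_apply, ELmat_apply, Dmat_apply]
  congr 1
  · rw [apply_ite (fun f : LR => f p), coeff_T]
    rfl
  · rw [apply_ite (fun f : LR => f p), coeff_C]
    rfl

lemma ELmat_coeff (a b : Fin N) (p : ℤ) :
    ((ELmat N) a b) p = if a = b + 1 then (if (1:ℤ) = p then (1:ℝ) else 0) else 0 := by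
  rw [ELmat_apply, apply_ite (fun f : LR => f p), coeff_T]
  rfl

lemma Dmat_coeff (w : Fin N → ℝ) (a b : Fin N) (p : ℤ) :
    ((Dmat w) a b) p = if a = b then (if (0:ℤ) = p then w a else 0) else 0 := by
  rw [Dmat_apply, apply_ite (fun f : LR => f p), coeff_C]
  rfl

/-! ### degree bounds and top-coefficient extraction -/

def MS (h : ℤ) (X : MM N) : Prop := ∀ (a b : Fin N) (p : ℤ), h < p → (X a b) p = 0

lemma MS.of_eq {a b : ℤ} {X : MM N} (h : MS a X) (e : a = b) : MS b X := e ▸ h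

lemma MS.mul {h1 h2 : ℤ} {X Y : MM N} (hX : MS h1 X) (hY : MS h2 Y) : MS (h1 + h2) (X * Y) := by
  intro a b p hp
  rw [Matrix.mul_apply, AddMonoidAlgebra.coeff_sum, Finsupp.finset_sum_apply]
  exact Finset.sum_eq_zero fun c _ => cmul_bound (hX a c) (hY c b) hp

lemma MS_V (v : ℕ → Fin N → ℝ) (i : ℕ) : MS 0 (Vjt N v i) := by
  intro a b p hp
  rw [Vjt_coeff, if_neg (show (0:ℤ) ≠ p by omega), if_neg (show (-1:ℤ) ≠ p by omega)]
  simp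

lemma MS_U1 (v : ℕ → Fin N → ℝ) : MS 1 (U1t N v) := by
  intro a b p hp
  rw [U1t_coeff, if_neg (show (1:ℤ) ≠ p by omega), if_neg (show (0:ℤ) ≠ p by omega)]
  simp

lemma MSlo_U1 (v : ℕ → Fin N → ℝ) : ∀ (a b : Fin N) (p : ℤ), p < 0 → ((U1t N v) a b) p = 0 := by
  intro a b p hp
  rw [U1t_coeff, if_neg (show (1:ℤ) ≠ p by omega), if_neg (show (0:ℤ) ≠ p by omega)]
  simp

lemma MS_ELmat : MS 1 (ELmat N) := by
  intro a b p hp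
  rw [ELmat_coeff, if_neg (show (1:ℤ) ≠ p by omega)]
  simp

lemma MS_Dmat (w : Fin N → ℝ) : MS 0 (Dmat w) := by
  intro a b p hp
  rw [Dmat_coeff, if_neg (show (0:ℤ) ≠ p by omega)]
  simp

lemma MS_one : MS 0 (1 : MM N) := by
  intro a b p hp
  rw [Matrix.one_apply, apply_ite (fun f : LR => f p), coeff_one,
    if_neg (show (0:ℤ) ≠ p by omega)]
  simp

end Stmt17Aux
namespace Stmt17Aux

variable {N : ℕ} [NeZero N]

/-! ### real coefficient matrices -/

def cf (p : ℤ) (X : MM N) : Matrix (Fin N) (Fin N) ℝ := Matrix.of fun a b => (X a b) p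

def Er : Matrix (Fin N) (Fin N) ℝ := Matrix.of fun a b => if a = b + 1 then 1 else 0
def Ar (w : Fin N → ℝ) : Matrix (Fin N) (Fin N) ℝ :=
  Matrix.of fun a b => if b = a + 1 then w a else 0
def Dr (d : Fin N → ℝ) : Matrix (Fin N) (Fin N) ℝ :=
  Matrix.of fun a b => if a = b then d a else 0

lemma cf_mul_left0 {X Y : MM N} {h : ℤ} (hX : MS 0 X) (hY : MS h Y) :
    cf h (X * Y) = cf 0 X * cf h Y := by
  apply Matrix.ext; intro a b
  rw [cf, Matrix.of_apply, Matrix.mul_apply, AddMonoidAlgebra.coeff_sum, Finsupp.finset_sum_apply, Matrix.mul_apply]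
  exact Finset.sum_congr rfl fun c _ => cmul_left0 (hX a c) (hY c b)

lemma cf_mul_right0 {X Y : MM N} {h : ℤ} (hX : MS h X) (hY : MS 0 Y) :
    cf h (X * Y) = cf h X * cf 0 Y := by
  apply Matrix.ext; intro a b
  rw [cf, Matrix.of_apply, Matrix.mul_apply, AddMonoidAlgebra.coeff_sum, Finsupp.finset_sum_apply, Matrix.mul_apply]
  exact Finset.sum_congr rfl fun c _ => cmul_right0 (hX a c) (hY c b)

lemma cf_mul_two {X Y : MM N} {p : ℤ} (hX : MS 0 X) (hY : MS (p + 1) Y) :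
    cf p (X * Y) = cf 0 X * cf p Y + cf (-1) X * cf (p + 1) Y := by
  apply Matrix.ext; intro a b
  rw [cf, Matrix.of_apply, Matrix.mul_apply, AddMonoidAlgebra.coeff_sum, Finsupp.finset_sum_apply, Matrix.add_apply,
    Matrix.mul_apply, Matrix.mul_apply, ← Finset.sum_add_distrib]
  exact Finset.sum_congr rfl fun c _ => cmul_two (hX a c) (hY c b)

lemma cf_mul_mixed {X Y : MM N} (hX : MS 1 X) (hY : MS 0 Y) :
    cf 0 (X * Y) = cf 0 X * cf 0 Y + cf 1 X * cf (-1) Y := by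
  apply Matrix.ext; intro a b
  rw [cf, Matrix.of_apply, Matrix.mul_apply, AddMonoidAlgebra.coeff_sum, Finsupp.finset_sum_apply, Matrix.add_apply,
    Matrix.mul_apply, Matrix.mul_apply, ← Finset.sum_add_distrib]
  exact Finset.sum_congr rfl fun c _ => cmul_mixed (hX a c) (hY c b)

lemma cf_V0 (v : ℕ → Fin N → ℝ) (i : ℕ) : cf 0 (Vjt N v i) = 1 := by
  apply Matrix.ext; intro a b
  simp only [cf, Matrix.of_apply, Vjt_coeff, Matrix.one_apply]
  norm_num

lemma cf_Vneg1 (v : ℕ → Fin N → ℝ) (i : ℕ) : cf (-1) (Vjt N v i) = Ar (v i) := by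
  apply Matrix.ext; intro a b
  simp only [cf, Matrix.of_apply, Vjt_coeff, Ar]
  norm_num

lemma cf_U1_1 (v : ℕ → Fin N → ℝ) : cf 1 (U1t N v) = Er := by
  apply Matrix.ext; intro a b
  simp only [cf, Matrix.of_apply, U1t_coeff, Er]
  norm_num

lemma cf_U1_0 (v : ℕ → Fin N → ℝ) : cf 0 (U1t N v) = Dr (v 1) := by
  apply Matrix.ext; intro a b
  simp only [cf, Matrix.of_apply, U1t_coeff, Dr]
  norm_num

lemma cf_EL_1 : cf 1 (ELmat N) = Er := by
  apply Matrix.ext; intro a b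
  simp only [cf, Matrix.of_apply, ELmat_coeff, Er]
  norm_num

lemma cf_one : cf 0 (1 : MM N) = 1 := by
  apply Matrix.ext; intro a b
  simp only [cf, Matrix.of_apply, Matrix.one_apply, apply_ite (fun f : LR => f 0), coeff_one]
  norm_num

lemma cf_one_neg1 : cf (-1) (1 : MM N) = Ar (fun _ => 0) := by
  apply Matrix.ext; intro a b
  simp only [cf, Matrix.of_apply, Matrix.one_apply, Ar, apply_ite (fun f : LR => f (-1)),
    coeff_one]
  norm_num

lemma Er_mul_Ar (w : Fin N → ℝ) : Er * Ar w = Dr (fun k => w (k - 1)) := by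
  apply Matrix.ext; intro a b
  rw [Matrix.mul_apply, Finset.sum_eq_single (a - 1)]
  · rw [Er, Ar, Dr, Matrix.of_apply, Matrix.of_apply, Matrix.of_apply,
      if_pos (by rw [sub_add_cancel])]
    by_cases h : a = b
    · rw [if_pos (by rw [h, sub_add_cancel]), if_pos h, one_mul]
    · rw [if_neg (fun hh => h (by rw [hh, sub_add_cancel])), if_neg h, mul_zero]
  · intro c _ hc
    rw [Er, Matrix.of_apply, if_neg (fun hh => hc (by rw [hh, add_sub_cancel_right])), zero_mul]
  · simp

lemma Ar_mul_Er (w : Fin N → ℝ) : Ar w * Er = Dr w := by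
  apply Matrix.ext; intro a b
  rw [Matrix.mul_apply, Finset.sum_eq_single (a + 1)]
  · rw [Er, Ar, Dr, Matrix.of_apply, Matrix.of_apply, Matrix.of_apply, if_pos rfl]
    by_cases h : a = b
    · rw [if_pos (by rw [h]), if_pos h, mul_one]
    · rw [if_neg (fun hh => h (add_right_cancel hh)), if_neg h, mul_zero]
  · intro c _ hc
    rw [Ar, Matrix.of_apply, if_neg hc, zero_mul]
  · simp

lemma Ar_add (d e : Fin N → ℝ) : Ar d + Ar e = Ar (fun k => d k + e k) := by
  apply Matrix.ext; intro a b
  simp only [Matrix.add_apply, Ar, Matrix.of_apply]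
  by_cases h : b = a + 1
  · rw [if_pos h, if_pos h, if_pos h]
  · rw [if_neg h, if_neg h, if_neg h, add_zero]

lemma Dr_add (d e : Fin N → ℝ) : Dr d + Dr e = Dr (fun k => d k + e k) := by
  apply Matrix.ext; intro a b
  simp only [Matrix.add_apply, Dr, Matrix.of_apply]
  by_cases h : a = b
  · rw [if_pos h, if_pos h, if_pos h]
  · rw [if_neg h, if_neg h, if_neg h, add_zero]

end Stmt17Aux
namespace Stmt17Aux

open Pointwise

variable {N : ℕ} [NeZero N]

/-! ### matrix-valued derivatives, coefficientwise -/

def HD (F : ℝ → MM N) (F' : MM N) (t : ℝ) : Prop :=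
  ∀ (a b : Fin N) (p : ℤ), HasDerivAt (fun s => ((F s) a b) p) ((F' a b) p) t

def Win (S : Finset ℤ) (F : ℝ → MM N) : Prop := ∀ s a b, ((F s) a b).coeff.support ⊆ S

lemma Win.mono {S S' : Finset ℤ} {F : ℝ → MM N} (h : Win S F) (hS : S ⊆ S') : Win S' F :=
  fun s a b => (h s a b).trans hS

lemma Win.mul {S S' : Finset ℤ} {F G : ℝ → MM N} (hF : Win S F) (hG : Win S' G) :
    Win (S + S') (fun s => F s * G s) := by
  intro s a b q hq
  dsimp only at hq
  rw [Finsupp.mem_support_iff, Matrix.mul_apply, AddMonoidAlgebra.coeff_sum, Finsupp.finset_sum_apply] at hq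
  obtain ⟨c, -, hc⟩ := Finset.exists_ne_zero_of_sum_ne_zero hq
  have hq' : q ∈ (F s a c * G s c b).coeff.support := Finsupp.mem_support_iff.mpr hc
  have := AddMonoidAlgebra.support_coeff_mul_subset (F s a c) (G s c b) hq'
  exact Finset.add_subset_add (hF s a c) (hG s c b) this

lemma Win_V (v : ℝ → ℕ → Fin N → ℝ) (i : ℕ) :
    Win (Finset.Icc (-1) 0) (fun s => Vjt N (v s) i) := by
  intro s a b q hq
  rw [Finsupp.mem_support_iff, Vjt_coeff] at hq
  rw [Finset.mem_Icc]
  by_contra hcon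
  push_neg at hcon
  apply hq
  rw [if_neg (show (0:ℤ) ≠ q by omega), if_neg (show (-1:ℤ) ≠ q by omega)]
  simp

lemma Win_U1 (v : ℝ → ℕ → Fin N → ℝ) :
    Win (Finset.Icc 0 1) (fun s => U1t N (v s)) := by
  intro s a b q hq
  rw [Finsupp.mem_support_iff, U1t_coeff] at hq
  rw [Finset.mem_Icc]
  by_contra hcon
  push_neg at hcon
  apply hq
  rw [if_neg (show (1:ℤ) ≠ q by omega), if_neg (show (0:ℤ) ≠ q by omega)]
  simp

lemma Win_one : Win (Finset.Icc (-1) 0) (fun _ : ℝ => (1 : MM N)) := by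
  intro s a b q hq
  dsimp only at hq
  rw [Finsupp.mem_support_iff, Matrix.one_apply, apply_ite (fun f : LR => f q), coeff_one] at hq
  rw [Finset.mem_Icc]
  by_contra hcon
  push_neg at hcon
  apply hq
  rw [if_neg (show (0:ℤ) ≠ q by omega)]
  simp

lemma HD.congr_deriv {F : ℝ → MM N} {X Y : MM N} {t : ℝ} (h : HD F X t) (hXY : X = Y) :
    HD F Y t := hXY ▸ h

lemma HD_const (X : MM N) (t : ℝ) : HD (fun _ => X) 0 t := by
  intro a b p
  simpa using hasDerivAt_const t ((X a b) p)

lemma HD.mul {F G : ℝ → MM N} {F' G' : MM N} {t : ℝ} (S : Finset ℤ)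
    (hW : Win S F) (hF : HD F F' t) (hG : HD G G' t) :
    HD (fun s => F s * G s) (F' * G t + F t * G') t := by
  have hW' : ∀ a b, (F' a b).coeff.support ⊆ S := by
    intro a b q hq
    by_contra hqS
    have h0 : ∀ s, ((F s) a b) q = 0 := fun s =>
      Finsupp.notMem_support_iff.mp fun h => hqS (hW s a b h)
    have h1 := hF a b q
    rw [show (fun s => ((F s) a b) q) = fun _ => (0:ℝ) from funext h0] at h1
    exact Finsupp.mem_support_iff.mp hq (h1.unique (hasDerivAt_const t 0))
  intro a b p
  have key : ∀ s, ((F s * G s) a b) p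
      = ∑ c : Fin N, ∑ q ∈ S, ((F s) a c) q * ((G s) c b) (p - q) := by
    intro s
    rw [Matrix.mul_apply, AddMonoidAlgebra.coeff_sum, Finsupp.finset_sum_apply]
    exact Finset.sum_congr rfl fun c _ => mul_apply_sup _ _ S (hW s a c) p
  have target : ((F' * G t + F t * G') a b) p
      = ∑ c : Fin N, ∑ q ∈ S,
          ((F' a c) q * ((G t) c b) (p - q) + ((F t) a c) q * ((G' c b) (p - q))) := by
    rw [Matrix.add_apply, AddMonoidAlgebra.coeff_add, Finsupp.add_apply, Matrix.mul_apply, Matrix.mul_apply,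
      AddMonoidAlgebra.coeff_sum, AddMonoidAlgebra.coeff_sum,
      Finsupp.finset_sum_apply, Finsupp.finset_sum_apply, ← Finset.sum_add_distrib]
    refine Finset.sum_congr rfl fun c _ => ?_
    rw [mul_apply_sup _ _ S (hW' a c) p, mul_apply_sup _ _ S (hW t a c) p,
      ← Finset.sum_add_distrib]
  rw [show (fun s => ((F s * G s) a b) p)
      = fun s => ∑ c : Fin N, ∑ q ∈ S, ((F s) a c) q * ((G s) c b) (p - q) from funext key,
    target]
  exact HasDerivAt.fun_sum fun c _ => HasDerivAt.fun_sum fun q _ => (hF a c q).fun_mul (hG c b (p - q))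

end Stmt17Aux
namespace Stmt17Aux

open Pointwise

variable {N : ℕ} [NeZero N]

section Factors

variable (v : ℝ → ℕ → Fin N → ℝ) (t : ℝ)

lemma HD_V (i : ℕ) (g : Fin N → ℝ)
    (hodei : ∀ k, HasDerivAt (fun s => v s i k) (g k) t) :
    HD (fun s => Vjt N (v s) i) (Amat g) t := by
  intro a b p
  rw [show (fun s => ((Vjt N (v s) i) a b) p)
      = fun s => (if a = b then (if (0:ℤ) = p then (1:ℝ) else 0) else 0)
        + (if b = a + 1 then (if (-1:ℤ) = p then v s i a else 0) else 0)
    from funext fun s => Vjt_coeff (v s) i a b p]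
  rw [Amat_apply]
  by_cases hb : b = a + 1
  · simp only [if_pos hb]
    by_cases hp : (-1:ℤ) = p
    · simp only [if_pos hp]
      rw [coeff_CT, if_pos hp]
      exact (hodei a).const_add _
    · simp only [if_neg hp]
      rw [coeff_CT, if_neg hp]
      exact hasDerivAt_const t _
  · simp only [if_neg hb]
    rw [show ((0 : LR)) p = 0 from rfl]
    exact hasDerivAt_const t _

lemma HD_U1 (g : Fin N → ℝ)
    (hode1 : ∀ k, HasDerivAt (fun s => v s 1 k) (g k) t) :
    HD (fun s => U1t N (v s)) (Dmat g) t := by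
  intro a b p
  rw [show (fun s => ((U1t N (v s)) a b) p)
      = fun s => (if a = b + 1 then (if (1:ℤ) = p then (1:ℝ) else 0) else 0)
        + (if a = b then (if (0:ℤ) = p then v s 1 a else 0) else 0)
    from funext fun s => U1t_coeff (v s) a b p]
  rw [Dmat_coeff]
  by_cases hb : a = b
  · simp only [if_pos hb]
    by_cases hp : (0:ℤ) = p
    · simp only [if_pos hp]
      exact (hode1 a).const_add _
    · simp only [if_neg hp]
      exact hasDerivAt_const t _
  · simp only [if_neg hb]
    rw [add_zero]
    exact hasDerivAt_const t _

end Factors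

section Main

variable (m : ℕ) (v : ℝ → ℕ → Fin N → ℝ)

/-- the right-hand side of the Bogoyavlensky system -/
def bog (t : ℝ) (i : ℕ) (k : Fin N) : ℝ :=
  v t i k *
    ((∑ l ∈ Finset.Icc (i + 1) m, (v t l k - v t l (k - 1)))
      + ∑ l ∈ Finset.Icc 1 (i - 1), (v t l (k + 1) - v t l k))

variable (t : ℝ)

lemma V_gauge (i : ℕ) (him : i + 1 ≤ m) :
    Vjt N (v t) (i + 1) * Gm m (v t) i - Gm m (v t) (i + 1) * Vjt N (v t) (i + 1)
      = Amat (bog m v t (i + 1)) := by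
  rw [Vjt_eq, Gm, Gm,
    Vlax (v t (i + 1)) (dfun m (v t) i) (dfun m (v t) (i + 1)) (dfun_succ m (v t) i him)]
  exact congrArg Amat (funext fun k => by
    rw [dfun_ode m (v t) i him k]; rfl)

lemma U_gauge (hm : 1 ≤ m) :
    U1t N (v t) * Gm m (v t) m - Gm m (v t) 1 * U1t N (v t) = Dmat (bog m v t 1) := by
  rw [U1t_eq, Gm, Gm,
    Ulax (v t 1) (dfun m (v t) m) (dfun m (v t) 1) (dfun_wrap m (v t) hm)]
  exact congrArg Dmat (funext fun k => by
    rw [dfun_ode1 m (v t) hm k]; rfl)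

variable (hode : ∀ (i : ℕ), 1 ≤ i → i ≤ m → ∀ (k : Fin N) (t : ℝ),
      HasDerivAt (fun s => v s i k)
        (v t i k *
          ((∑ l ∈ Finset.Icc (i + 1) m, (v t l k - v t l (k - 1)))
            + ∑ l ∈ Finset.Icc 1 (i - 1), (v t l (k + 1) - v t l k))) t)

include hode in
/-- the chain of `V` factors with indices `c+1, …, c+n` (decreasing), with its gauges -/
lemma chainHD (c n : ℕ) (hc : 1 ≤ c) (hcn : c + n ≤ m) :
    HD (fun s => ((List.range' (c + 1) n).reverse.map (Vjt N (v s))).prod)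
      (((List.range' (c + 1) n).reverse.map (Vjt N (v t))).prod * Gm m (v t) c
        - Gm m (v t) (c + n)
          * ((List.range' (c + 1) n).reverse.map (Vjt N (v t))).prod) t := by
  induction n with
  | zero =>
    simp only [List.range'_zero, List.reverse_nil, List.map_nil, List.prod_nil, Nat.add_zero,
      one_mul, mul_one, sub_self]
    exact HD_const 1 t
  | succ n ih =>
    have hrw : ∀ (w : ℕ → Fin N → ℝ),
        ((List.range' (c + 1) (n + 1)).reverse.map (Vjt N w)).prod
          = Vjt N w (c + 1 + n)
            * ((List.range' (c + 1) n).reverse.map (Vjt N w)).prod := by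
      intro w
      rw [List.range'_concat, List.reverse_append, List.reverse_singleton, List.singleton_append,
        List.map_cons, List.prod_cons, one_mul]
    simp only [hrw]
    have hV := HD_V v t (c + 1 + n) (bog m v t (c + 1 + n))
      (fun k => hode (c + 1 + n) (by omega) (by omega) k t)
    have ihh := ih (by omega)
    have := HD.mul (Finset.Icc (-1) 0) (Win_V v (c + 1 + n)) hV ihh
    refine this.congr_deriv ?_
    have hg : Amat (bog m v t (c + 1 + n))
        = Vjt N (v t) (c + 1 + n) * Gm m (v t) (c + n)
          - Gm m (v t) (c + n + 1) * Vjt N (v t) (c + 1 + n) := by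
      rw [show c + 1 + n = c + n + 1 by omega]
      exact (V_gauge m v t (c + n) (by omega)).symm
    rw [hg, show c + (n + 1) = c + n + 1 by omega]
    noncomm_ring

lemma chainWin (c n : ℕ) :
    Win (Finset.Icc (-(n:ℤ)) 0)
      (fun s => ((List.range' (c + 1) n).reverse.map (Vjt N (v s))).prod) := by
  induction n with
  | zero =>
    simp only [List.range'_zero, List.reverse_nil, List.map_nil, List.prod_nil]
    intro s a b q hq
    dsimp only at hq
    rw [Finsupp.mem_support_iff, Matrix.one_apply, apply_ite (fun f : LR => f q), coeff_one] at hq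
    rw [Finset.mem_Icc]
    by_contra hcon
    push_neg at hcon
    apply hq
    rw [if_neg (show (0:ℤ) ≠ q by omega)]
    simp
  | succ n ih =>
    have hrw : ∀ (w : ℕ → Fin N → ℝ),
        ((List.range' (c + 1) (n + 1)).reverse.map (Vjt N w)).prod
          = Vjt N w (c + 1 + n)
            * ((List.range' (c + 1) n).reverse.map (Vjt N w)).prod := by
      intro w
      rw [List.range'_concat, List.reverse_append, List.reverse_singleton, List.singleton_append,
        List.map_cons, List.prod_cons, one_mul]
    simp only [hrw]
    refine ((Win_V v (c + 1 + n)).mul ih).mono ?_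
    intro x hx
    rw [Finset.mem_add] at hx
    obtain ⟨y, hy, z, hz, rfl⟩ := hx
    rw [Finset.mem_Icc] at hy hz ⊢
    push_cast
    omega

lemma chainMS (c n : ℕ) :
    MS 0 (((List.range' (c + 1) n).reverse.map (Vjt N (v t))).prod)
    ∧ cf 0 (((List.range' (c + 1) n).reverse.map (Vjt N (v t))).prod) = 1
    ∧ cf (-1) (((List.range' (c + 1) n).reverse.map (Vjt N (v t))).prod)
        = Ar (fun k => ∑ i ∈ Finset.Ico (c + 1) (c + 1 + n), v t i k) := by
  induction n with
  | zero =>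
    simp only [List.range'_zero, List.reverse_nil, List.map_nil, List.prod_nil, Nat.add_zero,
      Finset.Ico_self, Finset.sum_empty]
    exact ⟨MS_one, cf_one, cf_one_neg1⟩
  | succ n ih =>
    obtain ⟨ih1, ih2, ih3⟩ := ih
    have hrw : ((List.range' (c + 1) (n + 1)).reverse.map (Vjt N (v t))).prod
          = Vjt N (v t) (c + 1 + n)
            * ((List.range' (c + 1) n).reverse.map (Vjt N (v t))).prod := by
      rw [List.range'_concat, List.reverse_append, List.reverse_singleton, List.singleton_append,
        List.map_cons, List.prod_cons, one_mul]
    rw [hrw]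
    refine ⟨by simpa using (MS_V (v t) (c + 1 + n)).mul ih1, ?_, ?_⟩
    · rw [cf_mul_left0 (MS_V (v t) (c + 1 + n)) ih1, cf_V0, ih2, one_mul]
    · have h2 : MS ((-1) + 1) (((List.range' (c + 1) n).reverse.map (Vjt N (v t))).prod) := by
        simpa using ih1
      rw [cf_mul_two (MS_V (v t) (c + 1 + n)) h2, cf_V0, cf_Vneg1, ih3]
      rw [show ((-1 : ℤ) + 1) = (0:ℤ) by norm_num, ih2, one_mul, mul_one, Ar_add]
      exact congrArg Ar (funext fun k => by
        rw [show c + 1 + (n + 1) = (c + 1 + n) + 1 from rfl,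
          Finset.sum_Ico_succ_top (by omega : c + 1 ≤ c + 1 + n)])
  
end Main

end Stmt17Aux
open Stmt17Aux in
theorem statement17 (m N : ℕ) (hm : 2 ≤ m) (hN : 2 ≤ N) [NeZero N]
    (v : ℝ → ℕ → Fin N → ℝ)
    -- the Bogoyavlensky equations of motion (sorts j are 1-based, sites cyclic mod N)
    (hode : ∀ (j : ℕ), 1 ≤ j → j ≤ m → ∀ (k : Fin N) (t : ℝ),
      HasDerivAt (fun s => v s j k)
        (v t j k *
          ((∑ i ∈ Finset.Icc (j + 1) m, (v t i k - v t i (k - 1)))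
            + ∑ i ∈ Finset.Icc 1 (j - 1), (v t i (k + 1) - v t i k))) t)
    (j : ℕ) (hj1 : 1 ≤ j) (hjm : j ≤ m) :
    -- (a) the strictly positive λ-degree part of L_j equals λE
    (∀ (t : ℝ) (a b : Fin N) (p : ℤ), 0 < p →
      (AddMonoidAlgebra.coeff ((Ljt m N (v t) j - ELmat N) a b)) p = 0)
    -- (b) writing L_j = λE + D_j + L_j⁻ (D_j of λ-degree 0, L_j⁻ of strictly negative
    -- λ-degree), one has d/dt L_j = [L_j⁻, L_j] = L_j⁻⬝L_j − L_j⬝L_j⁻, as an identity of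
    -- matrices over ℝ[λ,λ⁻¹] (read coefficientwise)
    ∧ (∀ Dj Lneg : ℝ → Matrix (Fin N) (Fin N) (LaurentPolynomial ℝ),
        (∀ (t : ℝ) (a b : Fin N) (p : ℤ), p ≠ 0 → (AddMonoidAlgebra.coeff (Dj t a b)) p = 0) →
        (∀ (t : ℝ) (a b : Fin N) (p : ℤ), 0 ≤ p → (AddMonoidAlgebra.coeff (Lneg t a b)) p = 0) →
        (∀ t : ℝ, Ljt m N (v t) j = ELmat N + Dj t + Lneg t) →
        ∀ (t : ℝ) (a b : Fin N) (p : ℤ),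
          HasDerivAt (fun s => (AddMonoidAlgebra.coeff (Ljt m N (v s) j a b)) p)
            ((AddMonoidAlgebra.coeff ((Lneg t * Ljt m N (v t) j - Ljt m N (v t) j * Lneg t) a b)) p) t) := by
  classical
  -- coefficient facts, at an arbitrary time t
  have keycf : ∀ t : ℝ,
      MS 1 (Ljt m N (v t) j)
      ∧ cf 1 (Ljt m N (v t) j) = Er
      ∧ cf 0 (Ljt m N (v t) j) = Dr (dfun m (v t) j) := by
    intro t
    have msl : MS 0 (((List.range' 2 (j - 1)).reverse.map (Vjt N (v t))).prod) :=
      (chainMS v t 1 (j - 1)).1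
    have cfl0 : cf 0 (((List.range' 2 (j - 1)).reverse.map (Vjt N (v t))).prod) = 1 :=
      (chainMS v t 1 (j - 1)).2.1
    have cfl1 : cf (-1) (((List.range' 2 (j - 1)).reverse.map (Vjt N (v t))).prod)
        = Ar (fun k => ∑ i ∈ Finset.Ico 2 (2 + (j - 1)), v t i k) :=
      (chainMS v t 1 (j - 1)).2.2
    have msr : MS 0 (((List.range' (j + 1) (m - j)).reverse.map (Vjt N (v t))).prod) :=
      (chainMS v t j (m - j)).1
    have cfr0 : cf 0 (((List.range' (j + 1) (m - j)).reverse.map (Vjt N (v t))).prod) = 1 :=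
      (chainMS v t j (m - j)).2.1
    have cfr1 : cf (-1) (((List.range' (j + 1) (m - j)).reverse.map (Vjt N (v t))).prod)
        = Ar (fun k => ∑ i ∈ Finset.Ico (j + 1) (j + 1 + (m - j)), v t i k) :=
      (chainMS v t j (m - j)).2.2
    have msU : MS 1 (U1t N (v t)) := MS_U1 (v t)
    have msY : MS 1 (((List.range' 2 (j - 1)).reverse.map (Vjt N (v t))).prod * U1t N (v t)) :=
      (msl.mul msU).of_eq (by norm_num)
    have msL : MS 1 (Ljt m N (v t) j) := (msY.mul msr).of_eq (by norm_num)
    refine ⟨msL, ?_, ?_⟩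
    · -- cf 1
      have e1 : cf 1 (((List.range' 2 (j - 1)).reverse.map (Vjt N (v t))).prod * U1t N (v t))
          = Er := by
        rw [cf_mul_left0 msl msU, cf_U1_1, cfl0, one_mul]
      have : cf 1 (Ljt m N (v t) j)
          = cf 1 ((((List.range' 2 (j - 1)).reverse.map (Vjt N (v t))).prod * U1t N (v t))
              * ((List.range' (j + 1) (m - j)).reverse.map (Vjt N (v t))).prod) := rfl
      rw [this, cf_mul_right0 msY msr, e1, cfr0, mul_one]
    · -- cf 0
      have msU01 : MS (0 + 1) (U1t N (v t)) := msU.of_eq (by norm_num)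
      have e1 : cf 1 (((List.range' 2 (j - 1)).reverse.map (Vjt N (v t))).prod * U1t N (v t))
          = Er := by
        rw [cf_mul_left0 msl msU, cf_U1_1, cfl0, one_mul]
      have e0 : cf 0 (((List.range' 2 (j - 1)).reverse.map (Vjt N (v t))).prod * U1t N (v t))
          = Dr (v t 1) + Ar (fun k => ∑ i ∈ Finset.Ico 2 (2 + (j - 1)), v t i k) * Er := by
        rw [cf_mul_two msl msU01, cfl0, one_mul, cfl1,
          show ((0:ℤ) + 1) = 1 by norm_num, cf_U1_1, cf_U1_0]
      have : cf 0 (Ljt m N (v t) j)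
          = cf 0 ((((List.range' 2 (j - 1)).reverse.map (Vjt N (v t))).prod * U1t N (v t))
              * ((List.range' (j + 1) (m - j)).reverse.map (Vjt N (v t))).prod) := rfl
      rw [this, cf_mul_mixed msY msr, e0, e1, cfr0, cfr1, mul_one, Ar_mul_Er, Er_mul_Ar,
        Dr_add, Dr_add]
      refine congrArg Dr (funext fun k => ?_)
      have hIl : Finset.Ico 2 (2 + (j - 1)) = Finset.Icc 2 j := by
        ext x; simp only [Finset.mem_Ico, Finset.mem_Icc]; omega
      have hIr : Finset.Ico (j + 1) (j + 1 + (m - j)) = Finset.Icc (j + 1) m := by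
        ext x; simp only [Finset.mem_Ico, Finset.mem_Icc]; omega
      rw [hIl, hIr]
      unfold dfun
      rw [sum_Icc_insert_left hj1 (fun l => v t l k)]
  constructor
  · -- part (a)
    intro t a b p hp
    obtain ⟨msL, cf1L, _⟩ := keycf t
    rw [Matrix.sub_apply, AddMonoidAlgebra.coeff_sub, Finsupp.sub_apply]
    rcases eq_or_lt_of_le (show (1:ℤ) ≤ p from hp) with hp1 | hp1
    · rw [← hp1]
      rw [show ((Ljt m N (v t) j) a b) 1 = Er a b from congrFun (congrFun cf1L a) b]
      rw [ELmat_coeff]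
      simp [Er]
    · rw [msL a b p (by omega), ELmat_coeff]
      rw [if_neg (show (1:ℤ) ≠ p by omega), ite_self]
      simp
  · -- part (b)
    intro Dj Lneg hDj hLneg hdec t a b p
    -- the Lax derivative
    have hWl := chainHD m v t hode 1 (j - 1) le_rfl (by omega)
    rw [show 1 + (j - 1) = j by omega] at hWl
    have hWr := chainHD m v t hode j (m - j) hj1 (by omega)
    rw [show j + (m - j) = m by omega] at hWr
    have hU : HD (fun s => U1t N (v s)) (Dmat (bog m v t 1)) t :=
      HD_U1 v t _ (fun k => hode 1 le_rfl (by omega) k t)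
    have hX := HD.mul (Finset.Icc (-((j - 1 : ℕ) : ℤ)) 0) (chainWin v 1 (j - 1)) hWl hU
    have hXval :
        (((List.range' (1 + 1) (j - 1)).reverse.map (Vjt N (v t))).prod * Gm m (v t) 1
            - Gm m (v t) j * ((List.range' (1 + 1) (j - 1)).reverse.map (Vjt N (v t))).prod)
            * U1t N (v t)
          + ((List.range' (1 + 1) (j - 1)).reverse.map (Vjt N (v t))).prod
            * Dmat (bog m v t 1)
        = (((List.range' (1 + 1) (j - 1)).reverse.map (Vjt N (v t))).prod * U1t N (v t))
            * Gm m (v t) m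
          - Gm m (v t) j
            * (((List.range' (1 + 1) (j - 1)).reverse.map (Vjt N (v t))).prod
              * U1t N (v t)) := by
      rw [← U_gauge m v t (by omega)]
      noncomm_ring
    have hX' := hX.congr_deriv hXval
    have hwinX := (chainWin v 1 (j - 1)).mul (Win_U1 v)
    have hL := HD.mul _ hwinX hX' hWr
    have hLval :
        ((((List.range' (1 + 1) (j - 1)).reverse.map (Vjt N (v t))).prod * U1t N (v t))
            * Gm m (v t) m
          - Gm m (v t) j
            * (((List.range' (1 + 1) (j - 1)).reverse.map (Vjt N (v t))).prod * U1t N (v t)))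
            * ((List.range' (j + 1) (m - j)).reverse.map (Vjt N (v t))).prod
          + (((List.range' (1 + 1) (j - 1)).reverse.map (Vjt N (v t))).prod * U1t N (v t))
            * (((List.range' (j + 1) (m - j)).reverse.map (Vjt N (v t))).prod * Gm m (v t) j
              - Gm m (v t) m
                * ((List.range' (j + 1) (m - j)).reverse.map (Vjt N (v t))).prod)
        = Ljt m N (v t) j * Gm m (v t) j - Gm m (v t) j * Ljt m N (v t) j := by
      show _ = (((List.range' (1 + 1) (j - 1)).reverse.map (Vjt N (v t))).prod * U1t N (v t)
          * ((List.range' (j + 1) (m - j)).reverse.map (Vjt N (v t))).prod) * Gm m (v t) j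
        - Gm m (v t) j
          * (((List.range' (1 + 1) (j - 1)).reverse.map (Vjt N (v t))).prod * U1t N (v t)
            * ((List.range' (j + 1) (m - j)).reverse.map (Vjt N (v t))).prod)
      noncomm_ring
    have hLHD := hL.congr_deriv hLval
    -- identify `Dj t`
    have hDjeq : Dj t = Dmat (dfun m (v t) j) := by
      apply Matrix.ext; intro x y
      apply AddMonoidAlgebra.ext; apply Finsupp.ext; intro q
      by_cases hq : q = 0
      · subst hq
        have hdect := congrFun (congrFun (hdec t) x) y
        have hval : (Ljt m N (v t) j x y) 0 = (Dj t x y) 0 := by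
          rw [hdect, Matrix.add_apply, Matrix.add_apply, AddMonoidAlgebra.coeff_add, AddMonoidAlgebra.coeff_add, Finsupp.add_apply, Finsupp.add_apply,
            ELmat_coeff, hLneg t x y 0 le_rfl]
          norm_num
        rw [← hval, Dmat_coeff,
          show (Ljt m N (v t) j x y) 0 = Dr (dfun m (v t) j) x y from
            congrFun (congrFun (keycf t).2.2 x) y]
        simp [Dr]
      · rw [hDj t x y q hq, Dmat_coeff, if_neg (show (0:ℤ) ≠ q from fun h => hq h.symm), ite_self]
    have hLneg' : Lneg t = Ljt m N (v t) j - ELmat N - Dj t := by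
      rw [hdec t]; abel
    have hcomm : Lneg t * Ljt m N (v t) j - Ljt m N (v t) j * Lneg t
        = Ljt m N (v t) j * Gm m (v t) j - Gm m (v t) j * Ljt m N (v t) j := by
      rw [hLneg', hDjeq, Gm]
      noncomm_ring
    rw [hcomm]
    exact hLHD a b p
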